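/- Let |ψ⟩ be a unit vector in ℂ^n and let Π_1, …, Π_N be pairwise commuting orthogonal projections with ranges S_1, …, S_N satisfying ⋂_{ℓ=1}^{N} S_ℓ = span{|ψ⟩}. For each ℓ let U_ℓ be a unitary with U_ℓ (I − Π_ℓ) U_ℓ† = Π_ℓ and U_ℓ( (⋂_{k<ℓ} S_k) ∩ S_ℓ^⊥ ) ⊆ (⋂_{k<ℓ} S_k) ∩ S_ℓ, and define E_ℓ(ρ) = Π_ℓ ρ Π_ℓ + U_ℓ (I − Π_ℓ) ρ (I − Π_ℓ) U_ℓ†. Then for every density matrix ρ on ℂ^n, the composition satisfies E_N ∘ ⋯ ∘ E_1 (ρ) = |ψ⟩⟨ψ|. -/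

import Mathlib

set_option maxHeartbeats 1000000

open Matrix
open scoped ComplexOrder


/-- Matrices equal if they agree on all mulVec. -/
lemma matEq {n : ℕ} (A B : Matrix (Fin n) (Fin n) ℂ)
    (h : ∀ v, A *ᵥ v = B *ᵥ v) : A = B := by
  ext i j
  have := congrFun (h (Pi.single j 1)) i
  simpa [Matrix.mulVec_single] using this

lemma pump_invariant {n : ℕ} : ∀ (N : ℕ)
    (P U : Fin N → Matrix (Fin n) (Fin n) ℂ)
    (_hP : ∀ ℓ, (P ℓ).IsHermitian ∧ P ℓ * P ℓ = P ℓ)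
    (_hPcomm : ∀ k ℓ, P k * P ℓ = P ℓ * P k)
    (_hU : ∀ ℓ, (U ℓ)ᴴ * U ℓ = 1)
    (_hUperp : ∀ ℓ, U ℓ * (1 - P ℓ) * (U ℓ)ᴴ = P ℓ)
    (_hsupp : ∀ ℓ k : Fin N, k < ℓ → ∀ x : Fin n → ℂ,
      (∀ j, j < ℓ → P j *ᵥ x = x) → P ℓ *ᵥ x = 0 →
      P k *ᵥ (U ℓ *ᵥ x) = U ℓ *ᵥ x)
    (σ : Matrix (Fin n) (Fin n) ℂ) (_hherm : σ.IsHermitian) (_htr : σ.trace = 1),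
    (Fin.foldl N
        (fun σ ℓ => P ℓ * σ * P ℓ + U ℓ * (1 - P ℓ) * σ * (1 - P ℓ) * (U ℓ)ᴴ) σ).IsHermitian ∧
    (Fin.foldl N
        (fun σ ℓ => P ℓ * σ * P ℓ + U ℓ * (1 - P ℓ) * σ * (1 - P ℓ) * (U ℓ)ᴴ) σ).trace = 1 ∧
    ∀ k, P k * (Fin.foldl N
        (fun σ ℓ => P ℓ * σ * P ℓ + U ℓ * (1 - P ℓ) * σ * (1 - P ℓ) * (U ℓ)ᴴ) σ) =
      Fin.foldl N
        (fun σ ℓ => P ℓ * σ * P ℓ + U ℓ * (1 - P ℓ) * σ * (1 - P ℓ) * (U ℓ)ᴴ) σ := by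
  intro N
  induction N with
  | zero =>
    intro P U hP hPcomm hU hUperp hsupp σ hherm htr
    refine ⟨by simpa using hherm, by simpa using htr, fun k => k.elim0⟩
  | succ N ih =>
    intro P U hP hPcomm hU hUperp hsupp σ hherm htr
    rw [Fin.foldl_succ_last]
    -- restricted families
    obtain ⟨hherm', htr', hfix'⟩ :=
      ih (fun k => P k.castSucc) (fun k => U k.castSucc)
        (fun ℓ => hP ℓ.castSucc) (fun k ℓ => hPcomm k.castSucc ℓ.castSucc)
        (fun ℓ => hU ℓ.castSucc) (fun ℓ => hUperp ℓ.castSucc)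
        (fun ℓ k hk x hx1 hx2 => by
          refine hsupp ℓ.castSucc k.castSucc (by simpa using hk) x ?_ hx2
          intro j hj
          have hjN : j.1 < N := lt_of_lt_of_le hj (by
            simpa using (Fin.castSucc_le_castSucc_iff.mpr ℓ.le_last ) |>.trans (le_refl _))
          have := hx1 ⟨j.1, hjN⟩ (by simpa [Fin.lt_def] using hj)
          simpa using this)
        σ hherm htr
    set τ := Fin.foldl N
        (fun σ' (ℓ : Fin N) => P ℓ.castSucc * σ' * P ℓ.castSucc +
          U ℓ.castSucc * (1 - P ℓ.castSucc) * σ' * (1 - P ℓ.castSucc) * (U ℓ.castSucc)ᴴ) σ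
      with hτdef
    clear_value τ
    set L := Fin.last N with hL
    set Q := P L with hQ
    set V := U L with hV
    have hQH : Qᴴ = Q := (hP L).1
    have hQ2 : Q * Q = Q := (hP L).2
    have hVU : Vᴴ * V = 1 := hU L
    have hVperp : V * (1 - Q) * Vᴴ = Q := hUperp L
    have hQcomm : ∀ j, P j * Q = Q * P j := fun j => hPcomm j L
    clear_value Q V
    have h1Q : (1 - Q) * (1 - Q) = 1 - Q := by
      have : (1 - Q) * (1 - Q) = 1 - Q - Q + Q * Q := by noncomm_ring
      rw [this, hQ2]; abel
    refine ⟨?_, ?_, ?_⟩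
    · -- Hermitian
      have : (Q * τ * Q + V * (1 - Q) * τ * (1 - Q) * Vᴴ)ᴴ
          = Q * τ * Q + V * (1 - Q) * τ * (1 - Q) * Vᴴ := by
        simp only [conjTranspose_add, conjTranspose_mul, conjTranspose_sub,
          conjTranspose_one, hQH, conjTranspose_conjTranspose, hherm'.eq]
        noncomm_ring
      exact this
    · -- trace
      have t1 : (Q * τ * Q).trace = (τ * Q).trace := by
        rw [Matrix.trace_mul_cycle, hQ2, Matrix.trace_mul_comm]
      have t2 : (V * (1 - Q) * τ * (1 - Q) * Vᴴ).trace = (τ * (1 - Q)).trace := by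
        rw [Matrix.trace_mul_cycle]
        have : Vᴴ * (V * (1 - Q) * τ) * (1 - Q) = (1 - Q) * τ * (1 - Q) := by
          calc Vᴴ * (V * (1 - Q) * τ) * (1 - Q)
              = (Vᴴ * V) * (1 - Q) * τ * (1 - Q) := by noncomm_ring
            _ = (1 - Q) * τ * (1 - Q) := by rw [hVU]; try noncomm_ring
        rw [this, Matrix.trace_mul_cycle, h1Q, Matrix.trace_mul_comm]
      rw [Matrix.trace_add, t1, t2, ← Matrix.trace_add]
      have : τ * Q + τ * (1 - Q) = τ := by noncomm_ring
      rw [this, htr']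
    · -- fixed by all P k
      intro k
      rcases Fin.lt_or_eq_of_le (Fin.le_last k) with hk | hk
      · -- k < last
        have hkN : k.1 < N := hk
        have hkc : k = Fin.castSucc ⟨k.1, hkN⟩ := by
          simp [Fin.ext_iff]
        have hfixk : P k * τ = τ := by rw [hkc]; exact hfix' ⟨k.1, hkN⟩
        have e1 : P k * (Q * τ * Q) = Q * τ * Q := by
          calc P k * (Q * τ * Q) = (P k * Q) * τ * Q := by noncomm_ring
            _ = (Q * P k) * τ * Q := by rw [hQcomm k]
            _ = Q * (P k * τ) * Q := by noncomm_ring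
            _ = Q * τ * Q := by rw [hfixk]
        have e2 : P k * (V * (1 - Q) * τ * (1 - Q) * Vᴴ) = V * (1 - Q) * τ * (1 - Q) * Vᴴ := by
          apply matEq
          intro v
          set x := (1 - Q) *ᵥ (τ *ᵥ ((1 - Q) *ᵥ (Vᴴ *ᵥ v))) with hx
          clear_value x
          have hMv : (V * (1 - Q) * τ * (1 - Q) * Vᴴ) *ᵥ v = V *ᵥ x := by
            simp only [hx, ← Matrix.mulVec_mulVec]; try rfl
          have hx1 : ∀ j, j < L → P j *ᵥ x = x := by
            intro j hj
            have hjN : j.1 < N := hj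
            have hjc : j = Fin.castSucc ⟨j.1, hjN⟩ := by simp [Fin.ext_iff]
            have hfixj : P j * τ = τ := by rw [hjc]; exact hfix' ⟨j.1, hjN⟩
            have : P j * ((1 - Q) * τ) = (1 - Q) * τ := by
              calc P j * ((1 - Q) * τ) = (P j * (1 - Q)) * τ := by noncomm_ring
                _ = ((1 - Q) * P j) * τ := by
                    congr 1
                    have := hQcomm j
                    simp only [Matrix.mul_sub, Matrix.sub_mul, Matrix.one_mul, Matrix.mul_one, this]
                _ = (1 - Q) * (P j * τ) := by noncomm_ring
                _ = (1 - Q) * τ := by rw [hfixj]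
            calc P j *ᵥ x = (P j * ((1 - Q) * τ)) *ᵥ ((1 - Q) *ᵥ (Vᴴ *ᵥ v)) := by
                  simp only [hx, Matrix.mulVec_mulVec]; congr 1; noncomm_ring
              _ = ((1 - Q) * τ) *ᵥ ((1 - Q) *ᵥ (Vᴴ *ᵥ v)) := by rw [this]
              _ = x := by simp only [hx, Matrix.mulVec_mulVec]; congr 1; noncomm_ring
          have hx2 : Q *ᵥ x = 0 := by
            have : Q * (1 - Q) = 0 := by
              rw [Matrix.mul_sub, Matrix.mul_one, hQ2, sub_self]
            calc Q *ᵥ x = (Q * (1 - Q)) *ᵥ (τ *ᵥ ((1 - Q) *ᵥ (Vᴴ *ᵥ v))) := by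
                  simp only [hx, Matrix.mulVec_mulVec]; congr 1; noncomm_ring
              _ = 0 := by rw [this, Matrix.zero_mulVec]
          rw [← Matrix.mulVec_mulVec, hMv, hV]
          rw [hQ] at hx2
          exact hsupp L k hk x hx1 hx2
        rw [Matrix.mul_add, e1, e2]
      · -- k = last
        have hPkQ : P k = Q := by rw [hk, hQ, hL]
        rw [hPkQ]
        have e1 : Q * (Q * τ * Q) = Q * τ * Q := by
          calc Q * (Q * τ * Q) = (Q * Q) * τ * Q := by noncomm_ring
            _ = Q * τ * Q := by rw [hQ2]
        have key : Q * (V * (1 - Q)) = V * (1 - Q) := by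
          calc Q * (V * (1 - Q)) = (V * (1 - Q) * Vᴴ) * (V * (1 - Q)) := by rw [hVperp]
            _ = V * (1 - Q) * (Vᴴ * V) * (1 - Q) := by noncomm_ring
            _ = V * ((1 - Q) * (1 - Q)) := by rw [hVU]; try noncomm_ring
            _ = V * (1 - Q) := by rw [h1Q]
        have e2 : Q * (V * (1 - Q) * τ * (1 - Q) * Vᴴ) = V * (1 - Q) * τ * (1 - Q) * Vᴴ := by
          calc Q * (V * (1 - Q) * τ * (1 - Q) * Vᴴ)
              = (Q * (V * (1 - Q))) * τ * (1 - Q) * Vᴴ := by noncomm_ring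
            _ = (V * (1 - Q)) * τ * (1 - Q) * Vᴴ := by rw [key]
        rw [Matrix.mul_add, e1, e2]

theorem splitting_subspace_preparation (n N : ℕ)
    (ψ : EuclideanSpace ℂ (Fin n)) (hψ : ‖ψ‖ = 1)
    (P : Fin N → Matrix (Fin n) (Fin n) ℂ)
    (hP : ∀ ℓ, (P ℓ).IsHermitian ∧ P ℓ * P ℓ = P ℓ)
    (hPcomm : ∀ k ℓ, P k * P ℓ = P ℓ * P k)
    (S : Fin N → Submodule ℂ (EuclideanSpace ℂ (Fin n)))
    (hS : ∀ ℓ, S ℓ = LinearMap.range (Matrix.toEuclideanLin (P ℓ)))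
    (hInt : (⨅ ℓ, S ℓ) = Submodule.span ℂ {ψ})
    (U : Fin N → Matrix (Fin n) (Fin n) ℂ)
    (hU : ∀ ℓ, U ℓ ∈ Matrix.unitaryGroup (Fin n) ℂ)
    (hUperp : ∀ ℓ, U ℓ * (1 - P ℓ) * (U ℓ)ᴴ = P ℓ)
    (hUmap : ∀ ℓ : Fin N,
      (((⨅ k : Fin N, ⨅ _ : k < ℓ, S k) ⊓ (S ℓ)ᗮ).map
          (Matrix.toEuclideanLin (U ℓ)))
        ≤ (⨅ k : Fin N, ⨅ _ : k < ℓ, S k) ⊓ S ℓ)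
    (ρ : Matrix (Fin n) (Fin n) ℂ) (hρ : ρ.PosSemidef) (hρtr : ρ.trace = 1) :
    Fin.foldl N
        (fun σ ℓ => P ℓ * σ * P ℓ + U ℓ * (1 - P ℓ) * σ * (1 - P ℓ) * (U ℓ)ᴴ) ρ
      = Matrix.of (fun i j => ψ i * star (ψ j)) := by
  have hU' : ∀ ℓ, (U ℓ)ᴴ * U ℓ = 1 := by
    intro ℓ
    have := (hU ℓ).1
    simpa [Matrix.star_eq_conjTranspose] using this
  -- membership helper: an element of S k is fixed by P k (as mulVec)
  have hfixmem : ∀ (k : Fin N) (w : Fin n → ℂ),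
      (WithLp.equiv 2 (Fin n → ℂ)).symm w ∈ S k → P k *ᵥ w = w := by
    intro k w hw
    rw [hS k] at hw
    obtain ⟨z, hz⟩ := hw
    have hz' : P k *ᵥ (WithLp.equiv 2 (Fin n → ℂ)) z = w := by
      have := congrArg (WithLp.equiv 2 (Fin n → ℂ)) hz
      exact this
    calc P k *ᵥ w = P k *ᵥ (P k *ᵥ (WithLp.equiv 2 (Fin n → ℂ)) z) := by rw [hz']
      _ = (P k * P k) *ᵥ (WithLp.equiv 2 (Fin n → ℂ)) z := by rw [Matrix.mulVec_mulVec]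
      _ = P k *ᵥ (WithLp.equiv 2 (Fin n → ℂ)) z := by rw [(hP k).2]
      _ = w := hz'
  have hmemfix : ∀ (k : Fin N) (w : Fin n → ℂ),
      P k *ᵥ w = w → (WithLp.equiv 2 (Fin n → ℂ)).symm w ∈ S k := by
    intro k w hw
    rw [hS k]
    exact ⟨(WithLp.equiv 2 (Fin n → ℂ)).symm w, by
      exact (congrArg (WithLp.toLp 2) hw : _)⟩
  have hsupp : ∀ ℓ k : Fin N, k < ℓ → ∀ x : Fin n → ℂ,
      (∀ j, j < ℓ → P j *ᵥ x = x) → P ℓ *ᵥ x = 0 →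
      P k *ᵥ (U ℓ *ᵥ x) = U ℓ *ᵥ x := by
    intro ℓ k hk x hx1 hx2
    set x' : EuclideanSpace ℂ (Fin n) := (WithLp.equiv 2 (Fin n → ℂ)).symm x with hx'
    have mem1 : x' ∈ ⨅ j : Fin N, ⨅ _ : j < ℓ, S j := by
      refine Submodule.mem_iInf _ |>.2 fun j => Submodule.mem_iInf _ |>.2 fun hj => ?_
      exact hmemfix j x (hx1 j hj)
    have mem2 : x' ∈ (S ℓ)ᗮ := by
      rw [Submodule.mem_orthogonal]
      intro u hu
      rw [hS ℓ] at hu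
      obtain ⟨z, hz⟩ := hu
      rw [← hz]
      have hadj : Matrix.toEuclideanLin (P ℓ) = LinearMap.adjoint (Matrix.toEuclideanLin (P ℓ)) := by
        conv_lhs => rw [← (hP ℓ).1.eq]
        exact Matrix.toEuclideanLin_conjTranspose_eq_adjoint (P ℓ)
      rw [hadj, LinearMap.adjoint_inner_left]
      have : Matrix.toEuclideanLin (P ℓ) x' = 0 := by
        rw [hx']
        exact (congrArg (WithLp.toLp 2) hx2 : _)
      rw [this, inner_zero_right]
    have hymem : Matrix.toEuclideanLin (U ℓ) x'
        ∈ (⨅ j : Fin N, ⨅ _ : j < ℓ, S j) ⊓ S ℓ :=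
      hUmap ℓ ⟨x', ⟨mem1, mem2⟩, rfl⟩
    have hy : Matrix.toEuclideanLin (U ℓ) x'
        = (WithLp.equiv 2 (Fin n → ℂ)).symm (U ℓ *ᵥ x) := by
      rw [hx']; rfl
    have hyk : (WithLp.equiv 2 (Fin n → ℂ)).symm (U ℓ *ᵥ x) ∈ S k := by
      rw [← hy]
      exact (Submodule.mem_iInf _ |>.1 (Submodule.mem_iInf _ |>.1 hymem.1 k)) hk
    exact hfixmem k _ hyk
  obtain ⟨hherm, htr, hfix⟩ :=
    pump_invariant N P U hP hPcomm hU' hUperp hsupp ρ hρ.1 hρtr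
  set τ := Fin.foldl N
      (fun σ ℓ => P ℓ * σ * P ℓ + U ℓ * (1 - P ℓ) * σ * (1 - P ℓ) * (U ℓ)ᴴ) ρ with hτ
  clear_value τ
  -- columns of τ lie in span {ψ}
  have hcol : ∀ v : Fin n → ℂ,
      (WithLp.equiv 2 (Fin n → ℂ)).symm (τ *ᵥ v) ∈ Submodule.span ℂ {ψ} := by
    intro v
    rw [← hInt]
    refine Submodule.mem_iInf _ |>.2 fun k => ?_
    refine hmemfix k _ ?_
    rw [Matrix.mulVec_mulVec, hfix k]
  have hcol' : ∀ j : Fin n, ∃ c : ℂ, ∀ i, τ i j = c * ψ i := by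
    intro j
    have := hcol (Pi.single j 1)
    rw [Submodule.mem_span_singleton] at this
    obtain ⟨c, hc⟩ := this
    refine ⟨c, fun i => ?_⟩
    have := congrFun (congrArg (WithLp.equiv 2 (Fin n → ℂ)) hc) i
    simp only [WithLp.equiv_apply, WithLp.ofLp_smul] at this
    have hτij : (τ *ᵥ Pi.single j 1) i = τ i j := by
      simp [Matrix.mulVec_single]
    rw [← hτij]
    have : (c • ψ) i = (τ *ᵥ Pi.single j 1) i := by
      rw [hc]; rfl
    rw [← this]
    rfl
  choose c hc using hcol'
  -- a coordinate where ψ is nonzero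
  obtain ⟨i0, hi0⟩ : ∃ i, ψ i ≠ 0 := by
    by_contra h
    push_neg at h
    have : ψ = 0 := by
      ext i; exact h i
    rw [this, norm_zero] at hψ
    exact one_ne_zero hψ.symm
  have hconj : ∀ i j, τ i j = star (τ j i) := by
    intro i j
    conv_lhs => rw [← hherm.eq]
    rfl
  set t : ℂ := star (c i0) / ψ i0 with ht
  have hct : ∀ j, c j = t * star (ψ j) := by
    intro j
    have h1 : c j * ψ i0 = star (c i0) * star (ψ j) := by
      calc c j * ψ i0 = τ i0 j := (hc j i0).symm
        _ = star (τ j i0) := hconj i0 j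
        _ = star (c i0 * ψ j) := by rw [hc i0 j]
        _ = star (c i0) * star (ψ j) := by rw [star_mul']
    rw [ht, div_mul_eq_mul_div, eq_div_iff hi0]
    linear_combination h1
  -- inner product of ψ with itself is 1
  have hinner : (∑ j, star (ψ j) * ψ j) = (1 : ℂ) := by
    have h1 : (inner ℂ ψ ψ : ℂ) = ∑ j, star (ψ j) * ψ j := by
      rw [PiLp.inner_apply]
      congr 1
      funext j
      exact RCLike.inner_apply' _ _
    have h2 : (inner ℂ ψ ψ : ℂ) = (‖ψ‖ : ℂ) ^ 2 := inner_self_eq_norm_sq_to_K ψ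
    rw [h1] at h2
    rw [h2, hψ]
    norm_num
  have htt : t = 1 := by
    have : τ.trace = t := by
      rw [Matrix.trace]
      have : ∀ j, τ.diag j = t * (star (ψ j) * ψ j) := by
        intro j
        rw [Matrix.diag_apply, hc j j, hct j]
        ring
      rw [Finset.sum_congr rfl (fun j _ => this j), ← Finset.mul_sum, hinner, mul_one]
    rw [htr] at this
    exact this.symm
  ext i j
  rw [hc j i, hct j, htt]
  simp [Matrix.of_apply]
  ring
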